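/- arXiv:1602.05805 — 2 statements merged into one kernel-verified Lean document; each statement's English description precedes it below -/
import Mathlib

section
/- Let u : D → ℂ be analytic. The multiplication operator M_{u'} : B → H^∞_{v_1}, f ↦ u'·f, is bounded if and only if sup_{z∈D} (1-|z|²)|u'(z)| log(e/(1-|z|²)) < ∞. -/
open Complex Metric Set Filter MeasureTheory Finset

noncomputable section

/-- The open unit disc in ℂ. -/
def D1 : Set ℂ := Metric.ball 0 1

/-- Analytic (holomorphic) on the open unit disc. -/
def AnalyticOnD (f : ℂ → ℂ) : Prop := DifferentiableOn ℂ f D1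

/-- Bloch seminorm. -/
def blochSemi (f : ℂ → ℂ) : ℝ := ⨆ z : D1, (1 - ‖(z : ℂ)‖ ^ 2) * ‖deriv f (z : ℂ)‖

/-- Bloch norm. -/
def blochNorm (f : ℂ → ℂ) : ℝ := ‖f 0‖ + blochSemi f

/-- Membership in the Bloch space. -/
def InBloch (f : ℂ → ℂ) : Prop :=
  AnalyticOnD f ∧ ∃ C, ∀ z ∈ D1, (1 - ‖z‖ ^ 2) * ‖deriv f z‖ ≤ C

/-- Sup norm over the unit disc. -/
def supNormD (f : ℂ → ℂ) : ℝ := ⨆ z : D1, ‖f (z : ℂ)‖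

/-- Weighted composition operator uC_φ. -/
def wco (u φ : ℂ → ℂ) (f : ℂ → ℂ) : ℂ → ℂ := fun z => u z * f (φ z)

/-- Multiplication operator M_u. -/
def mult (u : ℂ → ℂ) (f : ℂ → ℂ) : ℂ → ℂ := fun z => u z * f z

/-- The weight u_{(n)} = ∏_{j=0}^{n-1} u ∘ φ_j. -/
def wprod (u φ : ℂ → ℂ) (n : ℕ) : ℂ → ℂ := fun z => ∏ j ∈ Finset.range n, u (φ^[j] z)

/-- Boundedness of an operator on the Bloch space. -/
def BddOnBloch (T : (ℂ → ℂ) → (ℂ → ℂ)) : Prop :=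
  ∃ C, ∀ f, InBloch f → InBloch (T f) ∧ blochNorm (T f) ≤ C * blochNorm f

/-- Operator norm on the Bloch space. -/
def opNormB (T : (ℂ → ℂ) → (ℂ → ℂ)) : ℝ :=
  sInf {C : ℝ | 0 ≤ C ∧ ∀ f, InBloch f → blochNorm (T f) ≤ C * blochNorm f}

/-- Invertibility of an operator on the Bloch space (bounded two-sided inverse). -/
def InvertibleOnBloch (T : (ℂ → ℂ) → (ℂ → ℂ)) : Prop :=
  BddOnBloch T ∧ ∃ S, BddOnBloch S ∧
    ∀ f, InBloch f → Set.EqOn (S (T f)) f D1 ∧ Set.EqOn (T (S f)) f D1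

/-- Spectrum of an operator acting on the Bloch space. -/
def blochSpectrum (T : (ℂ → ℂ) → (ℂ → ℂ)) : Set ℂ :=
  {lam | ¬ InvertibleOnBloch (fun f z => lam * f z - T f z)}

/-- Automorphism of the unit disc (Möbius form). -/
def IsDiscAuto (φ : ℂ → ℂ) : Prop :=
  ∃ lam a : ℂ, ‖lam‖ = 1 ∧ a ∈ D1 ∧ ∀ z, φ z = lam * (a - z) / (1 - (starRingEnd ℂ) a * z)

/-- Hyperbolic distance on the unit disc. -/
def hypDist (z w : ℂ) : ℝ :=
  (1 / 2) * Real.log ((1 + ‖(z - w) / (1 - (starRingEnd ℂ) z * w)‖) /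
    (1 - ‖(z - w) / (1 - (starRingEnd ℂ) z * w)‖))

/-- The disc algebra A(𝔻). -/
def InDiscAlgebra (u : ℂ → ℂ) : Prop :=
  ContinuousOn u (Metric.closedBall 0 1) ∧ AnalyticOnD u

/-- u is bounded away from zero on the unit disc. -/
def BoundedAwayFromZero (u : ℂ → ℂ) : Prop := ∃ δ > 0, ∀ z ∈ D1, δ ≤ ‖u z‖

/-- Parabolic automorphism with unique fixed point a on the unit circle (φ'(a)=1). -/
def IsParabolicAuto (φ : ℂ → ℂ) (a : ℂ) : Prop :=
  IsDiscAuto φ ∧ ‖a‖ = 1 ∧ φ a = a ∧ deriv φ a = 1 ∧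
    ∀ w, ‖w‖ ≤ 1 → φ w = w → w = a

/-- Hyperbolic automorphism with attractive fixed point a and repulsive fixed point b. -/
def IsHyperbolicAuto (φ : ℂ → ℂ) (a b : ℂ) : Prop :=
  IsDiscAuto φ ∧ ‖a‖ = 1 ∧ ‖b‖ = 1 ∧ a ≠ b ∧ φ a = a ∧ φ b = b ∧
    ∃ μ : ℝ, 0 < μ ∧ μ < 1 ∧ deriv φ a = (μ : ℂ)

/-- Square of the Dirichlet norm (normalized area measure on 𝔻). -/
def dirichletNormSq (f : ℂ → ℂ) : ℝ :=
  ‖f 0‖ ^ 2 + (1 / Real.pi) * ∫ z in D1, ‖deriv f z‖ ^ 2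

/-- Dirichlet norm. -/
def dirichletNorm (f : ℂ → ℂ) : ℝ := Real.sqrt (dirichletNormSq f)

/-- Membership in the Dirichlet space. -/
def InDirichlet (f : ℂ → ℂ) : Prop :=
  AnalyticOnD f ∧ MeasureTheory.IntegrableOn (fun z => ‖deriv f z‖ ^ 2) D1

/-- Boundedness of an operator on the Dirichlet space. -/
def BddOnDirichlet (T : (ℂ → ℂ) → (ℂ → ℂ)) : Prop :=
  ∃ C, ∀ f, InDirichlet f → InDirichlet (T f) ∧ dirichletNorm (T f) ≤ C * dirichletNorm f

/-- Operator norm on the Dirichlet space. -/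
def opNormDir (T : (ℂ → ℂ) → (ℂ → ℂ)) : ℝ :=
  sInf {C : ℝ | 0 ≤ C ∧ ∀ f, InDirichlet f → dirichletNorm (T f) ≤ C * dirichletNorm f}

/-- Invertibility of an operator on the Dirichlet space. -/
def InvertibleOnDirichlet (T : (ℂ → ℂ) → (ℂ → ℂ)) : Prop :=
  BddOnDirichlet T ∧ ∃ S, BddOnDirichlet S ∧
    ∀ f, InDirichlet f → Set.EqOn (S (T f)) f D1 ∧ Set.EqOn (T (S f)) f D1

/-- Spectrum of an operator on the Dirichlet space. -/
def dirichletSpectrum (T : (ℂ → ℂ) → (ℂ → ℂ)) : Set ℂ :=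
  {lam | ¬ InvertibleOnDirichlet (fun f z => lam * f z - T f z)}

/-- Operator norm of M_{u'} : B → H^∞_{v₁}. -/
def opNormBtoHv1 (u : ℂ → ℂ) : ℝ :=
  sInf {C : ℝ | 0 ≤ C ∧ ∀ f, InBloch f → ∀ z ∈ D1,
    (1 - ‖z‖ ^ 2) * ‖deriv u z * f z‖ ≤ C * blochNorm f}

/-- Operator norm of M_{u'} : 𝒟 → A². -/
def opNormDtoA2 (u : ℂ → ℂ) : ℝ :=
  sInf {C : ℝ | 0 ≤ C ∧ ∀ f, InDirichlet f →
    Real.sqrt ((1 / Real.pi) * ∫ z in D1, ‖deriv u z * f z‖ ^ 2) ≤ C * dirichletNorm f}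

/-- The logarithmic weight log(e/(1-|z|²)). -/
def logWeight (z : ℂ) : ℝ := Real.log (Real.exp 1 / (1 - ‖z‖ ^ 2))

/-- Characterization of multipliers of the Bloch space: u ∈ H^∞ and the log condition. -/
def MultBChar (u : ℂ → ℂ) : Prop :=
  (∃ M, ∀ z ∈ D1, ‖u z‖ ≤ M) ∧
  (∃ M, ∀ z ∈ D1, (1 - ‖z‖ ^ 2) * ‖deriv u z‖ * logWeight z ≤ M)

-- ===== auxiliary lemmas =====

lemma aux_memD1 {z : ℂ} : z ∈ D1 ↔ ‖z‖ < 1 := by simp [D1]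

lemma aux_D1open : IsOpen D1 := isOpen_ball

instance : Nonempty D1 := ⟨⟨0, by simp [D1]⟩⟩

lemma aux_blochSemi_nonneg (f : ℂ → ℂ) : 0 ≤ blochSemi f :=
  Real.iSup_nonneg fun z => by
    have h := aux_memD1.mp z.2
    have := norm_nonneg (z : ℂ)
    have : (0:ℝ) ≤ 1 - ‖(z:ℂ)‖ ^ 2 := by nlinarith
    positivity

lemma aux_blochNorm_nonneg (f : ℂ → ℂ) : 0 ≤ blochNorm f :=
  add_nonneg (norm_nonneg _) (aux_blochSemi_nonneg f)

lemma aux_le_blochSemi (f : ℂ → ℂ) (C : ℝ)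
    (hC : ∀ z ∈ D1, (1 - ‖z‖ ^ 2) * ‖deriv f z‖ ≤ C) {z : ℂ} (hz : z ∈ D1) :
    (1 - ‖z‖ ^ 2) * ‖deriv f z‖ ≤ blochSemi f :=
  le_ciSup (⟨C, by rintro _ ⟨w, rfl⟩; exact hC w w.2⟩ : BddAbove _) (⟨z, hz⟩ : D1)

lemma aux_slit {w z : ℂ} (hw : ‖w‖ < 1) (hz : ‖z‖ ≤ 1) :
    (1 - (starRingEnd ℂ) w * z) ∈ Complex.slitPlane := by
  rw [Complex.mem_slitPlane_iff]
  left
  have h1 : ((starRingEnd ℂ) w * z).re ≤ ‖(starRingEnd ℂ) w * z‖ := Complex.re_le_norm _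
  have h2 : ‖(starRingEnd ℂ) w * z‖ = ‖w‖ * ‖z‖ := by rw [norm_mul, RCLike.norm_conj]
  have : ‖w‖ * ‖z‖ < 1 := by nlinarith [norm_nonneg z, norm_nonneg w]
  simp only [Complex.sub_re, Complex.one_re]
  linarith [h1.trans_lt (h2 ▸ this)]

lemma aux_fw_hasDeriv {w z : ℂ} (hw : ‖w‖ < 1) (hz : ‖z‖ < 1) :
    HasDerivAt (fun z => 1 - Complex.log (1 - (starRingEnd ℂ) w * z))
      ((starRingEnd ℂ) w / (1 - (starRingEnd ℂ) w * z)) z := by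
  have hin : HasDerivAt (fun z : ℂ => 1 - (starRingEnd ℂ) w * z) (-(starRingEnd ℂ) w) z := by
    simpa using ((hasDerivAt_id z).const_mul ((starRingEnd ℂ) w)).const_sub 1
  have hlog := (Complex.hasDerivAt_log (aux_slit hw hz.le)).comp z hin
  have := (hasDerivAt_const z (1:ℂ)).sub hlog
  exact this.congr_deriv (by ring)

lemma aux_fw_val {w : ℂ} (hw : ‖w‖ < 1) :
    ‖(1 : ℂ) - Complex.log (1 - (starRingEnd ℂ) w * w)‖ = logWeight w := by
  have hpos : (0:ℝ) < 1 - ‖w‖ ^ 2 := by nlinarith [norm_nonneg w]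
  have h1 : (starRingEnd ℂ) w * w = ((‖w‖ ^ 2 : ℝ) : ℂ) := by
    rw [Complex.conj_mul']; norm_cast
  have h2 : (1 : ℂ) - (starRingEnd ℂ) w * w = (((1 - ‖w‖ ^ 2 : ℝ)) : ℂ) := by
    rw [h1]; push_cast; ring
  rw [h2, ← Complex.ofReal_log hpos.le]
  have h3 : (1 : ℂ) - ((Real.log (1 - ‖w‖ ^ 2) : ℝ) : ℂ) = (((1 - Real.log (1 - ‖w‖ ^ 2) : ℝ)) : ℂ) := by
    push_cast; ring
  rw [h3, Complex.norm_real]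
  have hlog : Real.log (1 - ‖w‖ ^ 2) ≤ 0 := Real.log_nonpos hpos.le (by nlinarith [norm_nonneg w])
  rw [Real.norm_eq_abs, _root_.abs_of_nonneg (by linarith)]
  rw [logWeight, Real.log_div (Real.exp_ne_zero 1) (ne_of_gt hpos), Real.log_exp]

lemma aux_growth (f : ℂ → ℂ) (hf : DifferentiableOn ℂ f D1) (S : ℝ) (hS0 : 0 ≤ S)
    (hS : ∀ w ∈ D1, (1 - ‖w‖ ^ 2) * ‖deriv f w‖ ≤ S) {z : ℂ} (hz : z ∈ D1) :
    ‖f z‖ ≤ ‖f 0‖ + S * Real.log (1 / (1 - ‖z‖)) := by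
  have hz1 : ‖z‖ < 1 := by simpa [D1] using hz
  set r := ‖z‖ with hr
  have hr0 : 0 ≤ r := norm_nonneg z
  have h1r : (0:ℝ) < 1 - r := by linarith
  have han : AnalyticOnNhd ℂ f D1 := hf.analyticOnNhd aux_D1open
  have hdc : ContinuousOn (deriv f) D1 := (han.deriv).continuousOn
  have hnorm : ∀ t : ℝ, t ∈ Set.Icc (0:ℝ) 1 → ‖(t:ℂ) * z‖ = t * r := by
    intro t ht
    rw [norm_mul, Complex.norm_real, Real.norm_eq_abs, _root_.abs_of_nonneg ht.1]
  have hmem : ∀ t : ℝ, t ∈ Set.Icc (0:ℝ) 1 → (t : ℂ) * z ∈ D1 := by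
    intro t ht
    simp only [D1, mem_ball_zero_iff, dist_zero_right, hnorm t ht]
    nlinarith [ht.1, ht.2]
  have hg : ∀ t ∈ Set.uIcc (0:ℝ) 1, HasDerivAt (fun t : ℝ => f ((t:ℂ) * z))
      (deriv f ((t:ℂ) * z) * z) t := by
    intro t ht
    have h1 : HasDerivAt (fun t : ℝ => (t:ℂ) * z) z t := by
      simpa using (Complex.ofRealCLM.hasDerivAt.mul_const z)
    have h2 : HasDerivAt f (deriv f ((t:ℂ) * z)) ((t:ℂ) * z) :=
      (hf.differentiableAt (aux_D1open.mem_nhds (hmem t (by simpa using ht)))).hasDerivAt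
    exact h2.comp t h1
  have hcont : ContinuousOn (fun t : ℝ => deriv f ((t:ℂ) * z) * z) (Set.uIcc (0:ℝ) 1) := by
    apply ContinuousOn.mul _ continuousOn_const
    apply hdc.comp
    · exact (Complex.continuous_ofReal.mul continuous_const).continuousOn
    · intro t ht; exact hmem t (by simpa using ht)
  have hint : IntervalIntegrable (fun t : ℝ => deriv f ((t:ℂ) * z) * z) MeasureTheory.volume 0 1 :=
    hcont.intervalIntegrable
  have key : f z - f 0 = ∫ t in (0:ℝ)..1, deriv f ((t:ℂ) * z) * z := by
    have := intervalIntegral.integral_eq_sub_of_hasDerivAt hg hint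
    simp at this ⊢
    rw [← this]
  have hb : ∀ t ∈ Set.Icc (0:ℝ) 1, ‖deriv f ((t:ℂ) * z) * z‖ ≤ S * r / (1 - t * r) := by
    intro t ht
    have htr : 0 ≤ t * r := mul_nonneg ht.1 hr0
    have htr1 : t * r < 1 := by nlinarith [ht.1, ht.2]
    have hpos : (0:ℝ) < 1 - t * r := by linarith
    have hw := hS _ (hmem t ht)
    rw [hnorm t ht] at hw
    have hd : (1 - t * r) * ‖deriv f ((t:ℂ) * z)‖ ≤ S := by
      nlinarith [norm_nonneg (deriv f ((t:ℂ) * z))]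
    rw [norm_mul, le_div_iff₀ hpos]
    nlinarith [norm_nonneg (deriv f ((t:ℂ) * z))]
  have hFder : ∀ t ∈ Set.uIcc (0:ℝ) 1,
      HasDerivAt (fun t : ℝ => -S * Real.log (1 - t * r)) (S * r / (1 - t * r)) t := by
    intro t ht
    have ht' : t ∈ Set.Icc (0:ℝ) 1 := by simpa using ht
    have hpos : (0:ℝ) < 1 - t * r := by nlinarith [ht'.1, ht'.2]
    have hin : HasDerivAt (fun t : ℝ => 1 - t * r) (-r) t := by
      simpa using ((hasDerivAt_id t).mul_const r).const_sub 1
    have hlog := (Real.hasDerivAt_log (ne_of_gt hpos)).comp t hin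
    have := hlog.const_mul (-S)
    exact this.congr_deriv (by ring)
  have hbcont : ContinuousOn (fun t : ℝ => S * r / (1 - t * r)) (Set.uIcc (0:ℝ) 1) := by
    apply ContinuousOn.div continuousOn_const
    · exact continuousOn_const.sub (continuousOn_id.mul continuousOn_const)
    · intro t ht
      have ht' : t ∈ Set.Icc (0:ℝ) 1 := by simpa using ht
      have : (0:ℝ) < 1 - t * r := by nlinarith [ht'.1, ht'.2]
      exact ne_of_gt this
  have hbint : IntervalIntegrable (fun t : ℝ => S * r / (1 - t * r)) MeasureTheory.volume 0 1 :=
    hbcont.intervalIntegrable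
  have hIval : (∫ t in (0:ℝ)..1, S * r / (1 - t * r)) = S * Real.log (1 / (1 - r)) := by
    rw [intervalIntegral.integral_eq_sub_of_hasDerivAt hFder hbint, one_div, Real.log_inv]
    norm_num
  have hnormle : ‖f z - f 0‖ ≤ S * Real.log (1 / (1 - r)) := by
    rw [key, ← hIval]
    calc ‖∫ t in (0:ℝ)..1, deriv f ((t:ℂ) * z) * z‖
        ≤ ∫ t in (0:ℝ)..1, ‖deriv f ((t:ℂ) * z) * z‖ :=
          intervalIntegral.norm_integral_le_integral_norm zero_le_one
      _ ≤ ∫ t in (0:ℝ)..1, S * r / (1 - t * r) := by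
          apply intervalIntegral.integral_mono_on zero_le_one _ hbint hb
          exact hint.norm
  calc ‖f z‖ ≤ ‖f 0‖ + ‖f z - f 0‖ := by
        have := norm_sub_norm_le (f z) (f 0); linarith
    _ ≤ ‖f 0‖ + S * Real.log (1 / (1 - r)) := by linarith

lemma aux_logWeight_eq {z : ℂ} (hz : ‖z‖ < 1) :
    logWeight z = 1 - Real.log (1 - ‖z‖ ^ 2) := by
  have hpos : (0:ℝ) < 1 - ‖z‖ ^ 2 := by nlinarith [norm_nonneg z]
  rw [logWeight, Real.log_div (Real.exp_ne_zero 1) (ne_of_gt hpos), Real.log_exp]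

lemma aux_logWeight_ge_one {z : ℂ} (hz : ‖z‖ < 1) : 1 ≤ logWeight z := by
  have hpos : (0:ℝ) < 1 - ‖z‖ ^ 2 := by nlinarith [norm_nonneg z]
  have : Real.log (1 - ‖z‖ ^ 2) ≤ 0 :=
    Real.log_nonpos hpos.le (by nlinarith [norm_nonneg z])
  rw [aux_logWeight_eq hz]; linarith

lemma aux_logcomp {r : ℝ} (h0 : 0 ≤ r) (h1 : r < 1) :
    1 + Real.log (1 / (1 - r)) ≤ 2 * (1 - Real.log (1 - r ^ 2)) := by
  have hp1 : (0:ℝ) < 1 - r := by linarith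
  have hp2 : (0:ℝ) < 1 - r ^ 2 := by nlinarith
  have hkey : (1 - r ^ 2) ^ 2 ≤ Real.exp 1 * (1 - r) := by
    have he : (2.7182818283 : ℝ) < Real.exp 1 := Real.exp_one_gt_d9
    nlinarith [sq_nonneg (r - 1/3), sq_nonneg r, sq_nonneg (r*r - r)]
  have hlog : Real.log ((1 - r ^ 2) ^ 2) ≤ Real.log (Real.exp 1 * (1 - r)) :=
    Real.log_le_log (by positivity) hkey
  rw [Real.log_pow, Real.log_mul (Real.exp_ne_zero 1) hp1.ne', Real.log_exp] at hlog
  rw [one_div, Real.log_inv]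
  push_cast at hlog
  linarith

/-- M_{u'} : B → H^∞_{v₁} is bounded iff the log condition holds. -/
theorem stmt_2 (u : ℂ → ℂ) (hu : AnalyticOnD u) :
    (∃ C : ℝ, ∀ f, InBloch f → ∀ z ∈ D1,
        (1 - ‖z‖ ^ 2) * ‖deriv u z * f z‖ ≤ C * blochNorm f) ↔
      (∃ M : ℝ, ∀ z ∈ D1, (1 - ‖z‖ ^ 2) * ‖deriv u z‖ * logWeight z ≤ M) := by
  constructor
  · rintro ⟨C, hC⟩
    refine ⟨3 * max C 0, fun w hw => ?_⟩
    have hw1 : ‖w‖ < 1 := aux_memD1.mp hw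
    set fw : ℂ → ℂ := fun z => 1 - Complex.log (1 - (starRingEnd ℂ) w * z) with hfw
    have hder : ∀ z ∈ D1, deriv fw z = (starRingEnd ℂ) w / (1 - (starRingEnd ℂ) w * z) := by
      intro z hz
      exact (aux_fw_hasDeriv hw1 (aux_memD1.mp hz)).deriv
    have hbound : ∀ z ∈ D1, (1 - ‖z‖ ^ 2) * ‖deriv fw z‖ ≤ 2 := by
      intro z hz
      have hz1 : ‖z‖ < 1 := aux_memD1.mp hz
      have hz0 : 0 ≤ ‖z‖ := norm_nonneg z
      rw [hder z hz, norm_div, RCLike.norm_conj]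
      have hX : 1 - ‖z‖ ≤ ‖1 - (starRingEnd ℂ) w * z‖ := by
        have h1 := norm_sub_norm_le (1 : ℂ) ((starRingEnd ℂ) w * z)
        have h2 : ‖(starRingEnd ℂ) w * z‖ ≤ ‖z‖ := by
          rw [norm_mul, RCLike.norm_conj]
          nlinarith [norm_nonneg w]
        simp only [norm_one] at h1
        linarith
      have hXpos : (0:ℝ) < 1 - ‖z‖ := by linarith
      have hdiv : ‖w‖ / ‖1 - (starRingEnd ℂ) w * z‖ ≤ 1 / (1 - ‖z‖) :=
        div_le_div₀ zero_le_one hw1.le hXpos hX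
      have hzz : (0:ℝ) ≤ 1 - ‖z‖ ^ 2 := by nlinarith
      have := mul_le_mul_of_nonneg_left hdiv hzz
      have heq : (1 - ‖z‖ ^ 2) * (1 / (1 - ‖z‖)) = 1 + ‖z‖ := by
        have hfac : (1 - ‖z‖ ^ 2) = (1 + ‖z‖) * (1 - ‖z‖) := by ring
        rw [hfac, mul_one_div, mul_div_assoc, div_self hXpos.ne', mul_one]
      rw [heq] at this
      linarith
    have hIn : InBloch fw := by
      refine ⟨fun z hz => ?_, ⟨2, hbound⟩⟩
      exact (aux_fw_hasDeriv hw1 (aux_memD1.mp hz)).differentiableAt.differentiableWithinAt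
    have hsemi : blochSemi fw ≤ 2 := ciSup_le fun z => hbound z z.2
    have hzero : ‖fw 0‖ = 1 := by simp [hfw]
    have hbn3 : blochNorm fw ≤ 3 := by
      rw [blochNorm, hzero]; linarith
    have hbn0 : 0 ≤ blochNorm fw := aux_blochNorm_nonneg fw
    have happ := hC fw hIn w hw
    have hval : ‖fw w‖ = logWeight w := aux_fw_val hw1
    rw [norm_mul, hval] at happ
    have hstep : C * blochNorm fw ≤ 3 * max C 0 := by
      calc C * blochNorm fw ≤ max C 0 * blochNorm fw :=
            mul_le_mul_of_nonneg_right (le_max_left C 0) hbn0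
        _ ≤ max C 0 * 3 := mul_le_mul_of_nonneg_left hbn3 (le_max_right C 0)
        _ = 3 * max C 0 := by ring
    calc (1 - ‖w‖ ^ 2) * ‖deriv u w‖ * logWeight w
        = (1 - ‖w‖ ^ 2) * (‖deriv u w‖ * logWeight w) := by ring
      _ ≤ 3 * max C 0 := happ.trans hstep
  · rintro ⟨M, hM⟩
    refine ⟨2 * max M 0, fun f hf z hz => ?_⟩
    obtain ⟨hfa, C, hCb⟩ := hf
    have hz1 : ‖z‖ < 1 := aux_memD1.mp hz
    have hz0 : 0 ≤ ‖z‖ := norm_nonneg z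
    have hS : ∀ v ∈ D1, (1 - ‖v‖ ^ 2) * ‖deriv f v‖ ≤ blochSemi f :=
      fun v hv => aux_le_blochSemi f C hCb hv
    have hgr := aux_growth f hfa (blochSemi f) (aux_blochSemi_nonneg f) hS hz
    have hL0 : 0 ≤ Real.log (1 / (1 - ‖z‖)) := by
      apply Real.log_nonneg
      rw [le_div_iff₀ (by linarith : (0:ℝ) < 1 - ‖z‖)]
      linarith
    have hfz : ‖f z‖ ≤ blochNorm f * (1 + Real.log (1 / (1 - ‖z‖))) := by
      rw [blochNorm]
      nlinarith [norm_nonneg (f 0), aux_blochSemi_nonneg f]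
    have hlw : 1 ≤ logWeight z := aux_logWeight_ge_one hz1
    have hcomp : 1 + Real.log (1 / (1 - ‖z‖)) ≤ 2 * logWeight z := by
      rw [aux_logWeight_eq hz1]
      exact aux_logcomp hz0 hz1
    have hfz2 : ‖f z‖ ≤ 2 * blochNorm f * logWeight z := by
      have hbn0 : 0 ≤ blochNorm f := aux_blochNorm_nonneg f
      calc ‖f z‖ ≤ blochNorm f * (1 + Real.log (1 / (1 - ‖z‖))) := hfz
        _ ≤ blochNorm f * (2 * logWeight z) := mul_le_mul_of_nonneg_left hcomp hbn0
        _ = 2 * blochNorm f * logWeight z := by ring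
    have hA : (0:ℝ) ≤ (1 - ‖z‖ ^ 2) * ‖deriv u z‖ := by
      apply mul_nonneg _ (norm_nonneg _); nlinarith
    have hM' : (1 - ‖z‖ ^ 2) * ‖deriv u z‖ * logWeight z ≤ max M 0 :=
      (hM z hz).trans (le_max_left M 0)
    have hbn0 : 0 ≤ blochNorm f := aux_blochNorm_nonneg f
    rw [norm_mul]
    calc (1 - ‖z‖ ^ 2) * (‖deriv u z‖ * ‖f z‖)
        = ((1 - ‖z‖ ^ 2) * ‖deriv u z‖) * ‖f z‖ := by ring
      _ ≤ ((1 - ‖z‖ ^ 2) * ‖deriv u z‖) * (2 * blochNorm f * logWeight z) :=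
          mul_le_mul_of_nonneg_left hfz2 hA
      _ = 2 * blochNorm f * ((1 - ‖z‖ ^ 2) * ‖deriv u z‖ * logWeight z) := by ring
      _ ≤ 2 * blochNorm f * max M 0 :=
          mul_le_mul_of_nonneg_left hM' (by positivity)
      _ = 2 * max M 0 * blochNorm f := by ring
end
end

section
/- If φ is a finite Blaschke product of degree N, then for all z in the unit disc, (1-|φ(z)|²)/(1-|z|²) ≤ Σ_{j=1}^N (1+|a_j|)/(1-|a_j|), where a_1,…,a_N are the zeros of φ. -/
open Complex Metric Set Filter MeasureTheory Finset

noncomputable section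

lemma norm_one_sub_mul_ne (a z : ℂ) (ha : ‖a‖ < 1) (hz : ‖z‖ < 1) :
    (1 : ℂ) - (starRingEnd ℂ) a * z ≠ 0 := by
  intro h
  have h1 : (1:ℂ) = (starRingEnd ℂ) a * z := by linear_combination h
  have : (1:ℝ) = ‖(starRingEnd ℂ) a * z‖ := by rw [← h1]; simp
  rw [norm_mul, RCLike.norm_conj] at this
  nlinarith [norm_nonneg a, norm_nonneg z]

lemma key_identity (a z : ℂ) (ha : ‖a‖ < 1) (hz : ‖z‖ < 1) :
    1 - ‖(z - a) / (1 - (starRingEnd ℂ) a * z)‖ ^ 2 =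
      (1 - ‖a‖ ^ 2) * (1 - ‖z‖ ^ 2) / ‖1 - (starRingEnd ℂ) a * z‖ ^ 2 := by
  have hne := norm_one_sub_mul_ne a z ha hz
  have hpos : 0 < ‖(1:ℂ) - (starRingEnd ℂ) a * z‖ ^ 2 := pow_pos (norm_pos_iff.mpr hne) 2
  rw [norm_div, div_pow, eq_div_iff (ne_of_gt hpos), sub_mul, one_mul,
    div_mul_cancel₀ _ (ne_of_gt hpos)]
  have e : ∀ w : ℂ, ‖w‖ ^ 2 = Complex.normSq w := fun w => by
    rw [Complex.normSq_eq_norm_sq]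
  rw [e, e, e, e]
  simp only [Complex.normSq_apply, Complex.sub_re, Complex.sub_im, Complex.one_re,
    Complex.one_im, Complex.mul_re, Complex.mul_im, Complex.conj_re, Complex.conj_im]
  ring

lemma one_sub_prod_le_sum {ι : Type*} [DecidableEq ι] (s : Finset ι) (t : ι → ℝ)
    (h0 : ∀ i, 0 ≤ t i) (h1 : ∀ i, t i ≤ 1) :
    1 - ∏ i ∈ s, t i ≤ ∑ i ∈ s, (1 - t i) := by
  induction s using Finset.induction with
  | empty => simp
  | @insert i s hx ih =>
    rw [Finset.prod_insert hx, Finset.sum_insert hx]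
    have hp : 0 ≤ ∏ j ∈ s, t j := Finset.prod_nonneg fun j _ => h0 j
    have hp1 : ∏ j ∈ s, t j ≤ 1 := Finset.prod_le_one (fun j _ => h0 j) (fun j _ => h1 j)
    nlinarith [h0 i, h1 i, ih, mul_nonneg (sub_nonneg.mpr (h1 i)) (sub_nonneg.mpr hp1)]

theorem stmt_5_aux (N : ℕ) (lam : ℂ) (a : Fin N → ℂ) (hlam : ‖lam‖ = 1)
    (ha : ∀ j, a j ∈ Metric.ball (0:ℂ) 1) (φ : ℂ → ℂ)
    (hφ : ∀ z, φ z = lam * ∏ j, (z - a j) / (1 - (starRingEnd ℂ) (a j) * z)) :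
    ∀ z ∈ Metric.ball (0:ℂ) 1, (1 - ‖φ z‖ ^ 2) / (1 - ‖z‖ ^ 2) ≤ ∑ j, (1 + ‖a j‖) / (1 - ‖a j‖) := by
  intro z hz
  rw [Metric.mem_ball, dist_zero_right] at hz
  have ha' : ∀ j, ‖a j‖ < 1 := fun j => by
    have := ha j; rwa [Metric.mem_ball, dist_zero_right] at this
  set t : Fin N → ℝ := fun j => ‖(z - a j) / (1 - (starRingEnd ℂ) (a j) * z)‖ ^ 2 with ht
  have hzpos : (0:ℝ) < 1 - ‖z‖ ^ 2 := by nlinarith [norm_nonneg z]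
  have hkey : ∀ j, 1 - t j =
      (1 - ‖a j‖ ^ 2) * (1 - ‖z‖ ^ 2) / ‖1 - (starRingEnd ℂ) (a j) * z‖ ^ 2 :=
    fun j => key_identity (a j) z (ha' j) hz
  have hdpos : ∀ j, (0:ℝ) < ‖(1:ℂ) - (starRingEnd ℂ) (a j) * z‖ ^ 2 :=
    fun j => pow_pos (norm_pos_iff.mpr (norm_one_sub_mul_ne (a j) z (ha' j) hz)) 2
  have ht1 : ∀ j, t j ≤ 1 := by
    intro j
    have h1 : 0 ≤ 1 - t j := by
      rw [hkey j]
      have : (0:ℝ) ≤ 1 - ‖a j‖ ^ 2 := by nlinarith [norm_nonneg (a j), ha' j]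
      positivity
    linarith
  have ht0 : ∀ j, 0 ≤ t j := fun j => by positivity
  have hnorm : ‖φ z‖ ^ 2 = ∏ j, t j := by
    rw [hφ z, norm_mul, hlam, one_mul, norm_prod, ← Finset.prod_pow]
  have step1 : 1 - ‖φ z‖ ^ 2 ≤ ∑ j, (1 - t j) := by
    rw [hnorm]; exact one_sub_prod_le_sum _ _ ht0 ht1
  have step2 : (1 - ‖φ z‖ ^ 2) / (1 - ‖z‖ ^ 2) ≤ ∑ j, (1 - t j) / (1 - ‖z‖ ^ 2) := by
    rw [← Finset.sum_div]
    exact (div_le_div_iff_of_pos_right hzpos).mpr step1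
  refine step2.trans (Finset.sum_le_sum fun j _ => ?_)
  rw [hkey j, div_div, mul_comm (‖(1:ℂ) - (starRingEnd ℂ) (a j) * z‖ ^ 2) _,
    ← div_div, mul_div_cancel_right₀ _ (ne_of_gt hzpos)]
  have hb : (1 - ‖a j‖) ^ 2 ≤ ‖(1:ℂ) - (starRingEnd ℂ) (a j) * z‖ ^ 2 := by
    have h1 : 1 - ‖a j‖ ≤ ‖(1:ℂ) - (starRingEnd ℂ) (a j) * z‖ := by
      have := norm_sub_norm_le (1:ℂ) ((starRingEnd ℂ) (a j) * z)
      have h2 : ‖(starRingEnd ℂ) (a j) * z‖ ≤ ‖a j‖ := by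
        rw [norm_mul, RCLike.norm_conj]
        nlinarith [norm_nonneg (a j), norm_nonneg z]
      simp only [norm_one] at this
      linarith
    nlinarith [norm_nonneg ((1:ℂ) - (starRingEnd ℂ) (a j) * z), ha' j]
  have hapos : (0:ℝ) < 1 - ‖a j‖ := by linarith [ha' j]
  have hle : (1 - ‖a j‖ ^ 2) / ‖(1:ℂ) - (starRingEnd ℂ) (a j) * z‖ ^ 2 ≤
      (1 - ‖a j‖ ^ 2) / (1 - ‖a j‖) ^ 2 := by
    apply div_le_div_of_nonneg_left _ (by positivity) hb
    nlinarith [norm_nonneg (a j), ha' j]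
  refine hle.trans_eq ?_
  rw [div_eq_div_iff (by positivity) (ne_of_gt hapos)]
  ring


/-- pointwise estimate for finite Blaschke products. -/
theorem stmt_5 (N : ℕ) (lam : ℂ) (a : Fin N → ℂ) (hlam : ‖lam‖ = 1)
    (ha : ∀ j, a j ∈ D1) (φ : ℂ → ℂ)
    (hφ : ∀ z, φ z = lam * ∏ j, (z - a j) / (1 - (starRingEnd ℂ) (a j) * z)) :
    ∀ z ∈ D1, (1 - ‖φ z‖ ^ 2) / (1 - ‖z‖ ^ 2) ≤ ∑ j, (1 + ‖a j‖) / (1 - ‖a j‖) :=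
  stmt_5_aux N lam a hlam ha φ hφ
end
end
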